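/- arXiv:2201.05116 — 4 statements merged into one kernel-verified Lean document; each statement's English description precedes it below -/
import Mathlib

section
/- Let $d \ge 3$ and let $B \subset \mathbb{R}^d$ be a bounded balanced Borel set. Assume Siegel's formula $\int_{X_d} \widehat{\chi}_B \, d\mu_d = \mathrm{Vol}_d(B)/\zeta(d)$ and Rogers' formula $\int_{X_d} \widehat{\chi}_B^2 \, d\mu_d = 2\,\mathrm{Vol}_d(B)/\zeta(d) + (\mathrm{Vol}_d(B)/\zeta(d))^2$, and that $\widehat{\chi}_B$ takes values in $\{0\} \cup \{2,3,4,\dots\}$ on $\Omega_B = \{\widehat{\chi}_B > 0\}$. Then $\left| \mu_d(\Omega_B) - \frac{\mathrm{Vol}_d(B)}{2\zeta(d)} \right| \le \left( \frac{\mathrm{Vol}_d(B)}{2\zeta(d)} \right)^2$. -/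
open MeasureTheory
open scoped Pointwise

/-- The value `ζ(d) = ∑_{n≥1} 1/n^d` of the Riemann zeta function at a natural number. -/
noncomputable def zetaR (d : ℕ) : ℝ := ∑' n : ℕ, 1 / ((n : ℝ) + 1) ^ d

/-- Lemma on small volume asymptotics of hitting sets: let `d ≥ 3` and let
`B ⊆ ℝ^d` be a bounded balanced Borel set.  Assume Siegel's formula and Rogers' formula
for the Siegel transform `f = \widehat{χ}_B` (counting primitive lattice points in `B`),
and that `f ≥ 2` wherever positive.  Then
`|μ_d(Ω_B) - Vol(B)/(2ζ(d))| ≤ (Vol(B)/(2ζ(d)))²`. -/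
theorem stmt5 {d : ℕ} (hd : 3 ≤ d)
    (B : Set (Fin d → ℝ)) (hBbd : Bornology.IsBounded B) (hBmeas : MeasurableSet B)
    (hBbal : ∀ t : ℝ, |t| ≤ 1 → t • B ⊆ B)
    {X : Type*} [MeasurableSpace X] (μd : Measure X) [IsProbabilityMeasure μd]
    (f : X → ℕ) (hmeas : Measurable f)
    (hf1 : Integrable (fun x => (f x : ℝ)) μd)
    (hf2 : Integrable (fun x => (f x : ℝ) ^ 2) μd)
    (hSiegel : ∫ x, (f x : ℝ) ∂μd = (volume B).toReal / zetaR d)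
    (hRogers : ∫ x, (f x : ℝ) ^ 2 ∂μd =
      2 * (volume B).toReal / zetaR d + ((volume B).toReal / zetaR d) ^ 2)
    (heven : ∀ x, 0 < f x → 2 ≤ f x) :
    |(μd {x | 0 < f x}).toReal - (volume B).toReal / (2 * zetaR d)|
      ≤ ((volume B).toReal / (2 * zetaR d)) ^ 2 := by
  set Ω : Set X := {x | 0 < f x} with hΩdef
  have hΩ : MeasurableSet Ω := measurableSet_lt measurable_const hmeas
  set V : ℝ := (volume B).toReal / zetaR d with hV
  set m : ℝ := (μd Ω).toReal with hm
  set g : X → ℝ := Set.indicator Ω (fun _ => (2:ℝ)) with hg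
  have hgint : Integrable g μd := (integrable_const (2:ℝ)).indicator hΩ
  have hgval : ∫ x, g x ∂μd = m * 2 := by
    rw [hg, integral_indicator_const _ hΩ]
    simp [hm, mul_comm, Measure.real]
  -- pointwise: g ≤ f
  have hgf : ∀ x, g x ≤ (f x : ℝ) := by
    intro x
    by_cases hx : x ∈ Ω
    · have := heven x hx
      simp only [hg, Set.indicator_of_mem hx]
      exact_mod_cast this
    · simp [hg, Set.indicator_of_notMem hx]
  -- pointwise: 4f - 2g ≤ f²
  have hsq : ∀ x, 4 * (f x : ℝ) - 2 * g x ≤ (f x : ℝ) ^ 2 := by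
    intro x
    by_cases hx : x ∈ Ω
    · have h2 : (2:ℝ) ≤ (f x : ℝ) := by exact_mod_cast heven x hx
      simp only [hg, Set.indicator_of_mem hx]
      nlinarith [sq_nonneg ((f x : ℝ) - 2)]
    · have hx0 : f x = 0 := by
        have hlt : ¬ 0 < f x := hx
        omega
      simp [hg, Set.indicator_of_notMem hx, hx0]
  have hI1 : m * 2 ≤ V := by
    rw [← hgval, ← hSiegel]
    exact integral_mono hgint hf1 hgf
  have hI2 : 4 * V - 4 * m ≤ 2 * V + V ^ 2 := by
    have : ∫ x, (4 * (f x : ℝ) - 2 * g x) ∂μd ≤ ∫ x, (f x : ℝ) ^ 2 ∂μd :=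
      integral_mono ((hf1.const_mul 4).sub (hgint.const_mul 2)) hf2 hsq
    rw [integral_sub (hf1.const_mul 4) (hgint.const_mul 2), integral_const_mul,
      integral_const_mul, hgval, hSiegel, hRogers] at this
    have h2V : 2 * (volume B).toReal / zetaR d = 2 * V := by rw [hV]; ring
    rw [h2V] at this
    linarith
  have hVnn : 0 ≤ V := by
    rw [← hSiegel]
    exact integral_nonneg fun x => by positivity
  have hhalf : (volume B).toReal / (2 * zetaR d) = V / 2 := by
    rw [hV, div_div, mul_comm]
  rw [hhalf, abs_sub_le_iff]
  constructor
  · nlinarith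
  · nlinarith
end

section
/- Let $(Z,\nu)$ be a probability space, $(F_n)$ a sequence of finite index sets with $|F_n| \to \infty$, and for each $n$ and $h \in F_n$ a measurable set $A_{n,h} \subseteq Z$. Define $N_n(z) = \#\{h \in F_n : z \in A_{n,h}\}$ and, for $r \ge 1$ and $m \ge 0$, $\Delta_{n,r}(m) = \max\{ \big| |F_n|^r \nu(\bigcap_{h \in F'} A_{n,h}) - m^r \big| : F' \subseteq F_n, |F'| = r \}$ (with $\Delta_{n,r}(m)=0$ if $|F_n|<r$). If $\lim_{n\to\infty} \Delta_{n,r}(m) = 0$ for every $r \ge 1$, then for every $r \ge 1$, $\lim_{n\to\infty} \int_Z \binom{N_n}{r} \, d\nu = \frac{m^r}{r!}$; consequently $N_n$ converges in distribution to a Poisson random variable with mean $m$. -/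
open MeasureTheory Filter
open scoped Classical


lemma bonf_id (n k : ℕ) (h : k < n) (M : ℕ) :
    ∑ j ∈ Finset.range (M+1), (-1:ℝ)^j * ((k+j).choose k) * (n.choose (k+j))
      = (-1)^M * (n.choose k) * ((n - k - 1).choose M) := by
  induction M with
  | zero => simp
  | succ M ih =>
    rw [Finset.sum_range_succ, ih, show k+(M+1) = k+M+1 by omega]
    rcases le_or_gt (k+M+1) n with hle | hlt
    · have hmul : (n.choose (k+M+1)) * ((k+M+1).choose k) = n.choose k * (n-k).choose (M+1) := by
        have := Nat.choose_mul (n := n) (k := k+M+1) (s := k) (by omega)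
        simpa [Nat.add_sub_cancel_left, show k+M+1-k = M+1 by omega] using this
      have hpascal : (n-k).choose (M+1) = (n-k-1).choose M + (n-k-1).choose (M+1) := by
        have e : n - k = (n - k - 1) + 1 := by omega
        rw [e]
        exact Nat.choose_succ_succ _ _
      have hmulR : ((k+M+1).choose k : ℝ) * (n.choose (k+M+1)) =
          (n.choose k : ℝ) * ((n-k-1).choose M + ((n-k-1).choose (M+1) : ℝ)) := by
        have h2 := congrArg (fun x : ℕ => (x : ℝ)) hmul
        rw [hpascal] at h2
        push_cast at h2
        linarith
      linear_combination ((-1:ℝ)^(M+1)) * hmulR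
    · have h1 : n.choose (k+M+1) = 0 := Nat.choose_eq_zero_of_lt (by omega)
      have h2 : (n-k-1).choose (M+1) = 0 := Nat.choose_eq_zero_of_lt (by omega)
      have h3 : (n-k-1).choose M = 0 := Nat.choose_eq_zero_of_lt (by omega)
      rw [h1, h2, h3]
      simp

lemma bonf_bound (n k M : ℕ) :
    |(∑ j ∈ Finset.range (M+1), (-1:ℝ)^j * ((k+j).choose k) * (n.choose (k+j)))
        - (if n = k then 1 else 0)|
      ≤ ((k+M+1).choose k : ℝ) * (n.choose (k+M+1)) := by
  rcases lt_trichotomy n k with hlt | heq | hgt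
  · have hz : ∀ j, n.choose (k+j) = 0 := fun j => Nat.choose_eq_zero_of_lt (by omega)
    simp only [hz, Nat.cast_zero, mul_zero, Finset.sum_const_zero]
    rw [if_neg (by omega)]
    simp
    positivity
  · subst heq
    have hsum : ∑ j ∈ Finset.range (M+1), (-1:ℝ)^j * ((n+j).choose n) * (n.choose (n+j)) = 1 := by
      rw [Finset.sum_eq_single 0]
      · simp
      · intro j _ hj
        have : n.choose (n+j) = 0 := Nat.choose_eq_zero_of_lt (by omega)
        simp [this]
      · simp
    rw [hsum, if_pos rfl]
    simp
    positivity
  · rw [bonf_id n k hgt M, if_neg (by omega), sub_zero, abs_mul, abs_mul, abs_pow, abs_neg,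
      abs_one, one_pow, one_mul, Nat.abs_cast, Nat.abs_cast]
    rcases le_or_gt (k+M+1) n with hle | hlt2
    · have hmul : (n.choose (k+M+1)) * ((k+M+1).choose k) = n.choose k * (n-k).choose (M+1) := by
        have := Nat.choose_mul (n := n) (k := k+M+1) (s := k) (by omega)
        simpa [Nat.add_sub_cancel_left, show k+M+1-k = M+1 by omega] using this
      have hpascal : (n-k-1).choose M ≤ (n-k).choose (M+1) := by
        have e : n - k = (n - k - 1) + 1 := by omega
        calc (n-k-1).choose M ≤ (n-k-1).choose M + (n-k-1).choose (M+1) := Nat.le_add_right _ _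
          _ = ((n-k-1)+1).choose (M+1) := (Nat.choose_succ_succ _ _).symm
          _ = (n-k).choose (M+1) := by rw [← e]
      have : n.choose k * (n-k-1).choose M ≤ (k+M+1).choose k * n.choose (k+M+1) := by
        calc n.choose k * (n-k-1).choose M ≤ n.choose k * (n-k).choose (M+1) :=
              Nat.mul_le_mul_left _ hpascal
          _ = (k+M+1).choose k * n.choose (k+M+1) := by rw [← hmul]; ring
      exact_mod_cast this
    · have h3 : (n-k-1).choose M = 0 := Nat.choose_eq_zero_of_lt (by omega)
      rw [h3]
      simp
      positivity

lemma choose_div_pow_tendsto (r : ℕ) :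
    Tendsto (fun N : ℕ => (N.choose r : ℝ) / (N : ℝ) ^ r) atTop
      (nhds (1 / (Nat.factorial r : ℝ))) := by
  have h2 : Tendsto (fun N : ℕ => (1 / (Nat.factorial r : ℝ)) *
      ∏ i ∈ Finset.range r, (1 - (i : ℝ) / N)) atTop (nhds (1 / (Nat.factorial r : ℝ))) := by
    have hp : Tendsto (fun N : ℕ => ∏ i ∈ Finset.range r, (1 - (i : ℝ) / N)) atTop (nhds 1) := by
      have : Tendsto (fun N : ℕ => ∏ i ∈ Finset.range r, (1 - (i : ℝ) / N)) atTop
          (nhds (∏ i ∈ Finset.range r, (1 - 0 : ℝ))) := by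
        apply tendsto_finset_prod
        intro i _
        exact tendsto_const_nhds.sub (tendsto_const_div_atTop_nhds_zero_nat (i : ℝ))
      simpa using this
    simpa using hp.const_mul (1 / (Nat.factorial r : ℝ))
  apply h2.congr'
  filter_upwards [eventually_ge_atTop (max r 1)] with N hN
  have hNr : r ≤ N := le_trans (le_max_left _ _) hN
  have hN1 : 1 ≤ N := le_trans (le_max_right _ _) hN
  have hN0 : (N : ℝ) ≠ 0 := by
    have : (0:ℝ) < N := by exact_mod_cast hN1
    exact ne_of_gt this
  have hd : (N.descFactorial r : ℝ) = ∏ i ∈ Finset.range r, ((N:ℝ) - i) := by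
    rw [Nat.descFactorial_eq_prod_range, Nat.cast_prod]
    exact Finset.prod_congr rfl fun i hi => Nat.cast_sub (by have := Finset.mem_range.mp hi; omega)
  have hfac : (Nat.factorial r : ℝ) ≠ 0 := by positivity
  have hc : (N.choose r : ℝ) = (∏ i ∈ Finset.range r, ((N:ℝ) - i)) / (Nat.factorial r : ℝ) := by
    have h1 := congrArg (fun x : ℕ => (x : ℝ)) (Nat.descFactorial_eq_factorial_mul_choose N r)
    push_cast at h1
    rw [hd] at h1
    field_simp
    linarith
  have hprod : ∏ i ∈ Finset.range r, (1 - (i:ℝ)/N)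
      = (∏ i ∈ Finset.range r, ((N:ℝ) - i)) / (N:ℝ)^r := by
    have : ∏ i ∈ Finset.range r, (1 - (i:ℝ)/N)
        = ∏ i ∈ Finset.range r, (((N:ℝ) - i) / N) := by
      refine Finset.prod_congr rfl fun i _ => ?_
      field_simp
    rw [this, Finset.prod_div_distrib, Finset.prod_const, Finset.card_range]
  rw [hc, hprod]
  ring

lemma pois_term (k j : ℕ) (m : ℝ) :
    (-1:ℝ)^j * ((k+j).choose k : ℝ) * (m^(k+j) / (Nat.factorial (k+j) : ℝ))
      = m^k / (Nat.factorial k : ℝ) * ((-m)^j / (Nat.factorial j : ℝ)) := by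
  have h0 := Nat.add_choose_mul_factorial_mul_factorial j k
  rw [Nat.add_comm j k] at h0
  have h : ((k+j).choose k : ℝ) * (Nat.factorial j : ℝ) * (Nat.factorial k : ℝ)
      = (Nat.factorial (k+j) : ℝ) := by exact_mod_cast congrArg (fun x : ℕ => (x : ℝ)) h0
  have hk : (Nat.factorial k : ℝ) ≠ 0 := by positivity
  have hj : (Nat.factorial j : ℝ) ≠ 0 := by positivity
  have hkj : (Nat.factorial (k+j) : ℝ) ≠ 0 := by positivity
  rw [neg_pow, pow_add]
  field_simp
  rw [← h]
  ring

/-- general criterion for Poisson approximation: if the quantities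
`Δ_{n,r}(m) = max { | |F_n|^r ν(⋂_{h∈F'} A_{n,h}) - m^r | : F' ⊆ F_n, |F'| = r }` tend to
zero for every `r ≥ 1`, then the factorial moments of `N_n(z) = #{h ∈ F_n : z ∈ A_{n,h}}`
converge to those of the Poisson distribution with mean `m`, and consequently `N_n`
converges in distribution to `Poi(m)`. -/
theorem stmt6 {Z H : Type*} [MeasurableSpace Z] (ν : Measure Z) [IsProbabilityMeasure ν]
    (F : ℕ → Finset H) (hF : Tendsto (fun n => (F n).card) atTop atTop)
    (A : ℕ → H → Set Z) (hA : ∀ n h, MeasurableSet (A n h)) (m : ℝ) (hm : 0 ≤ m)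
    (hΔ : ∀ r : ℕ, 1 ≤ r → ∀ ε > (0 : ℝ), ∀ᶠ n in atTop,
      ∀ F' ⊆ F n, F'.card = r →
        |((F n).card : ℝ) ^ r * (ν (⋂ h ∈ F', A n h)).toReal - m ^ r| < ε) :
    (∀ r : ℕ, 1 ≤ r →
      Tendsto
        (fun n => ∫ z, (((F n).filter (fun h => z ∈ A n h)).card.choose r : ℝ) ∂ν)
        atTop (nhds (m ^ r / (Nat.factorial r : ℝ)))) ∧
    (∀ k : ℕ,
      Tendsto
        (fun n => (ν {z | ((F n).filter (fun h => z ∈ A n h)).card = k}).toReal)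
        atTop (nhds (m ^ k / (Nat.factorial k : ℝ) * Real.exp (-m)))) := by
  -- measurability of N
  have hNmeas : ∀ n, Measurable (fun z => ((F n).filter (fun h => z ∈ A n h)).card) := by
    intro n
    have : (fun z => ((F n).filter (fun h => z ∈ A n h)).card)
        = fun z => ∑ h ∈ F n, if z ∈ A n h then 1 else 0 := by
      funext z
      rw [Finset.card_filter]
    rw [this]
    apply Finset.measurable_sum
    intro h _
    exact Measurable.ite (hA n h) measurable_const measurable_const
  -- measurability of intersections
  have hmeasI : ∀ n (F' : Finset H), MeasurableSet (⋂ h ∈ F', A n h) := by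
    intro n F'
    exact Finset.measurableSet_biInter F' (fun h _ => hA n h)
  -- pointwise identity
  have hkey : ∀ n r z, ((((F n).filter (fun h => z ∈ A n h)).card.choose r : ℕ) : ℝ)
      = ∑ F' ∈ (F n).powersetCard r, Set.indicator (⋂ h ∈ F', A n h) (fun _ => (1:ℝ)) z := by
    intro n r z
    have h1 : ((F n).filter (fun h => z ∈ A n h)).powersetCard r
        = ((F n).powersetCard r).filter (fun F' => z ∈ ⋂ h ∈ F', A n h) := by
      ext t
      simp only [Finset.mem_powersetCard, Finset.mem_filter, Finset.subset_iff,
        Finset.mem_filter, Set.mem_iInter]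
      constructor
      · rintro ⟨h1, h2⟩
        exact ⟨⟨fun x hx => (h1 hx).1, h2⟩, fun i hi => (h1 hi).2⟩
      · rintro ⟨⟨h1, h2⟩, h3⟩
        exact ⟨fun x hx => ⟨h1 hx, h3 x hx⟩, h2⟩
    calc ((((F n).filter (fun h => z ∈ A n h)).card.choose r : ℕ) : ℝ)
        = (((((F n).filter (fun h => z ∈ A n h)).powersetCard r).card : ℕ) : ℝ) := by
          rw [Finset.card_powersetCard]
      _ = ∑ F' ∈ (F n).powersetCard r, Set.indicator (⋂ h ∈ F', A n h) (fun _ => (1:ℝ)) z := by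
          rw [h1, Finset.card_filter]
          push_cast
          refine Finset.sum_congr rfl fun F' _ => ?_
          simp [Set.indicator_apply]
  -- integrability
  have hInd_int : ∀ n (F' : Finset H),
      Integrable (Set.indicator (⋂ h ∈ F', A n h) (fun _ => (1:ℝ))) ν :=
    fun n F' => (integrable_const 1).indicator (hmeasI n F')
  have hChoose_int : ∀ n r,
      Integrable (fun z => ((((F n).filter (fun h => z ∈ A n h)).card.choose r : ℕ) : ℝ)) ν := by
    intro n r
    have he : (fun z => ((((F n).filter (fun h => z ∈ A n h)).card.choose r : ℕ) : ℝ))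
        = fun z => ∑ F' ∈ (F n).powersetCard r,
            Set.indicator (⋂ h ∈ F', A n h) (fun _ => (1:ℝ)) z := funext (hkey n r)
    rw [he]
    exact integrable_finset_sum _ fun F' _ => hInd_int n F'
  -- integral identity
  have hI : ∀ n r, ∫ z, ((((F n).filter (fun h => z ∈ A n h)).card.choose r : ℕ) : ℝ) ∂ν
      = ∑ F' ∈ (F n).powersetCard r, (ν (⋂ h ∈ F', A n h)).toReal := by
    intro n r
    have he : (fun z => ((((F n).filter (fun h => z ∈ A n h)).card.choose r : ℕ) : ℝ))
        = fun z => ∑ F' ∈ (F n).powersetCard r,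
            Set.indicator (⋂ h ∈ F', A n h) (fun _ => (1:ℝ)) z := funext (hkey n r)
    rw [he, integral_finset_sum _ (fun F' _ => hInd_int n F')]
    exact Finset.sum_congr rfl fun F' _ => integral_indicator_one (hmeasI n F')
  -- moment convergence (all r, including r = 0)
  have hmom : ∀ r : ℕ, Tendsto
      (fun n => ∫ z, ((((F n).filter (fun h => z ∈ A n h)).card.choose r : ℕ) : ℝ) ∂ν)
      atTop (nhds (m ^ r / (Nat.factorial r : ℝ))) := by
    intro r
    rcases Nat.eq_zero_or_pos r with hr0 | hr1
    · subst hr0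
      have : (fun n => ∫ z, ((((F n).filter (fun h => z ∈ A n h)).card.choose 0 : ℕ) : ℝ) ∂ν)
          = fun _ => (1:ℝ) := by
        funext n
        simp
      rw [this]
      simp [Nat.factorial]
    · -- r ≥ 1
      set S : ℕ → ℝ := fun n =>
        ∑ F' ∈ (F n).powersetCard r, (ν (⋂ h ∈ F', A n h)).toReal with hS
      set B : ℕ → ℝ := fun n =>
        ((F n).card.choose r : ℝ) / ((F n).card : ℝ) ^ r * m ^ r with hB
      have hBlim : Tendsto B atTop (nhds (m ^ r / (Nat.factorial r : ℝ))) := by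
        have h1 := ((choose_div_pow_tendsto r).comp hF).mul_const (m ^ r)
        have : 1 / (Nat.factorial r : ℝ) * m ^ r = m ^ r / (Nat.factorial r : ℝ) := by ring
        rw [this] at h1
        exact h1
      have hSB : Tendsto (fun n => S n - B n) atTop (nhds 0) := by
        rw [NormedAddCommGroup.tendsto_nhds_zero]
        intro ε hε
        have hfac : (0:ℝ) < (Nat.factorial r : ℝ) := by positivity
        have hε' : (0:ℝ) < ε * (Nat.factorial r : ℝ) / 2 := by positivity
        filter_upwards [hΔ r hr1 _ hε', hF.eventually_ge_atTop r, hF.eventually_ge_atTop 1]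
          with n hn hcr hc1
        set c : ℝ := ((F n).card : ℝ) with hc
        have hc0 : (0:ℝ) < c := by
          have h0 : 0 < (F n).card := hc1
          rw [hc]
          exact_mod_cast h0
        have hcpow : (0:ℝ) < c ^ r := by positivity
        have hterm : ∀ F' ∈ (F n).powersetCard r,
            |(ν (⋂ h ∈ F', A n h)).toReal - m ^ r / c ^ r| ≤ ε * (Nat.factorial r : ℝ) / 2 / c ^ r := by
          intro F' hF'
          rw [Finset.mem_powersetCard] at hF'
          have h2 := hn F' hF'.1 hF'.2
          have h3 : (ν (⋂ h ∈ F', A n h)).toReal - m ^ r / c ^ r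
              = (c ^ r * (ν (⋂ h ∈ F', A n h)).toReal - m ^ r) / c ^ r := by
            field_simp
          rw [h3, abs_div, abs_of_pos hcpow]
          gcongr
        have hBeq : B n = ∑ F' ∈ (F n).powersetCard r, m ^ r / c ^ r := by
          rw [Finset.sum_const, Finset.card_powersetCard, nsmul_eq_mul, hB]
          ring
        have h4 : S n - B n = ∑ F' ∈ (F n).powersetCard r,
            ((ν (⋂ h ∈ F', A n h)).toReal - m ^ r / c ^ r) := by
          rw [hBeq, hS, ← Finset.sum_sub_distrib]
        have h5 : ‖S n - B n‖ ≤ ((F n).card.choose r : ℝ) * (ε * (Nat.factorial r : ℝ) / 2 / c ^ r) := by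
          rw [Real.norm_eq_abs, h4]
          calc |∑ F' ∈ (F n).powersetCard r, ((ν (⋂ h ∈ F', A n h)).toReal - m ^ r / c ^ r)|
              ≤ ∑ F' ∈ (F n).powersetCard r,
                  |(ν (⋂ h ∈ F', A n h)).toReal - m ^ r / c ^ r| := Finset.abs_sum_le_sum_abs _ _
            _ ≤ ∑ _F' ∈ (F n).powersetCard r, (ε * (Nat.factorial r : ℝ) / 2 / c ^ r) :=
                Finset.sum_le_sum hterm
            _ = ((F n).card.choose r : ℝ) * (ε * (Nat.factorial r : ℝ) / 2 / c ^ r) := by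
                rw [Finset.sum_const, Finset.card_powersetCard, nsmul_eq_mul]
        have h6 : ((F n).card.choose r : ℝ) ≤ c ^ r / (Nat.factorial r : ℝ) := by
          have h7 := Nat.choose_le_pow_div (α := ℝ) r (F n).card
          push_cast at h7
          exact h7
        calc ‖S n - B n‖ ≤ ((F n).card.choose r : ℝ) * (ε * (Nat.factorial r : ℝ) / 2 / c ^ r) := h5
          _ ≤ (c ^ r / (Nat.factorial r : ℝ)) * (ε * (Nat.factorial r : ℝ) / 2 / c ^ r) :=
              mul_le_mul_of_nonneg_right h6 (by positivity)
          _ = ε / 2 := by field_simp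
          _ < ε := by linarith
      have := hSB.add hBlim
      rw [zero_add] at this
      have heq : (fun n => S n - B n + B n) = S := by funext n; ring
      rw [heq] at this
      have : Tendsto
          (fun n => ∫ z, ((((F n).filter (fun h => z ∈ A n h)).card.choose r : ℕ) : ℝ) ∂ν)
          atTop (nhds (m ^ r / (Nat.factorial r : ℝ))) := by
        apply this.congr
        intro n
        exact (hI n r).symm
      exact this
  -- measurable level sets
  have hmeasSet : ∀ n k, MeasurableSet {z | ((F n).filter (fun h => z ∈ A n h)).card = k} := by
    intro n k
    exact hNmeas n (measurableSet_singleton k)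
  have hP : ∀ n k, (ν {z | ((F n).filter (fun h => z ∈ A n h)).card = k}).toReal
      = ∫ z, Set.indicator {z | ((F n).filter (fun h => z ∈ A n h)).card = k} (fun _ => (1:ℝ)) z ∂ν :=
    fun n k => (integral_indicator_one (hmeasSet n k)).symm
  have hIndk_int : ∀ n k, Integrable
      (Set.indicator {z | ((F n).filter (fun h => z ∈ A n h)).card = k} (fun _ => (1:ℝ))) ν :=
    fun n k => (integrable_const 1).indicator (hmeasSet n k)
  -- key inequality from Bonferroni
  have hkey2 : ∀ k M n,
      |(∑ j ∈ Finset.range (M+1), (-1:ℝ)^j * ((k+j).choose k : ℝ) *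
          ∫ z, ((((F n).filter (fun h => z ∈ A n h)).card.choose (k+j) : ℕ) : ℝ) ∂ν)
        - (ν {z | ((F n).filter (fun h => z ∈ A n h)).card = k}).toReal|
      ≤ ((k+M+1).choose k : ℝ) *
          ∫ z, ((((F n).filter (fun h => z ∈ A n h)).card.choose (k+M+1) : ℕ) : ℝ) ∂ν := by
    intro k M n
    set g : Z → ℝ := fun z => ∑ j ∈ Finset.range (M+1), (-1:ℝ)^j * ((k+j).choose k : ℝ) *
        ((((F n).filter (fun h => z ∈ A n h)).card.choose (k+j) : ℕ) : ℝ) with hg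
    set ind : Z → ℝ := Set.indicator
        {z | ((F n).filter (fun h => z ∈ A n h)).card = k} (fun _ => (1:ℝ)) with hind
    have hg_int : Integrable g ν :=
      integrable_finset_sum _ fun j _ => (hChoose_int n (k+j)).const_mul _
    have hind_int : Integrable ind ν := hIndk_int n k
    have hgint_eq : ∫ z, g z ∂ν = ∑ j ∈ Finset.range (M+1), (-1:ℝ)^j * ((k+j).choose k : ℝ) *
        ∫ z, ((((F n).filter (fun h => z ∈ A n h)).card.choose (k+j) : ℕ) : ℝ) ∂ν := by
      rw [hg, integral_finset_sum _ (fun j _ => (hChoose_int n (k+j)).const_mul _)]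
      exact Finset.sum_congr rfl fun j _ => integral_const_mul _ _
    have hpt : ∀ z, |g z - ind z| ≤ ((k+M+1).choose k : ℝ) *
        ((((F n).filter (fun h => z ∈ A n h)).card.choose (k+M+1) : ℕ) : ℝ) := by
      intro z
      have hb := bonf_bound (((F n).filter (fun h => z ∈ A n h)).card) k M
      have hieq : ind z = if ((F n).filter (fun h => z ∈ A n h)).card = k then 1 else 0 := by
        rw [hind]
        simp [Set.indicator_apply]
      rw [hieq, hg]
      exact hb
    calc |(∑ j ∈ Finset.range (M+1), (-1:ℝ)^j * ((k+j).choose k : ℝ) *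
          ∫ z, ((((F n).filter (fun h => z ∈ A n h)).card.choose (k+j) : ℕ) : ℝ) ∂ν)
        - (ν {z | ((F n).filter (fun h => z ∈ A n h)).card = k}).toReal|
        = |∫ z, g z ∂ν - ∫ z, ind z ∂ν| := by rw [hgint_eq, hP n k]
      _ = |∫ z, (g z - ind z) ∂ν| := by rw [integral_sub hg_int hind_int]
      _ ≤ ∫ z, |g z - ind z| ∂ν := by
          have h8 := norm_integral_le_integral_norm (μ := ν) (f := fun z => g z - ind z)
          simpa [Real.norm_eq_abs] using h8
      _ ≤ ∫ z, ((k+M+1).choose k : ℝ) *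
            ((((F n).filter (fun h => z ∈ A n h)).card.choose (k+M+1) : ℕ) : ℝ) ∂ν :=
          integral_mono ((hg_int.sub hind_int).abs) ((hChoose_int n (k+M+1)).const_mul _) hpt
      _ = ((k+M+1).choose k : ℝ) *
            ∫ z, ((((F n).filter (fun h => z ∈ A n h)).card.choose (k+M+1) : ℕ) : ℝ) ∂ν :=
          integral_const_mul _ _
  -- exponential series
  have hexp : Tendsto (fun M => ∑ j ∈ Finset.range (M+1), ((-m)^j / (Nat.factorial j : ℝ)))
      atTop (nhds (Real.exp (-m))) := by
    have h := NormedSpace.expSeries_div_hasSum_exp (-m)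
    have h2 := h.tendsto_sum_nat
    have h3 : NormedSpace.exp (-m) = Real.exp (-m) := by rw [Real.exp_eq_exp_ℝ]
    rw [h3] at h2
    exact h2.comp (tendsto_add_atTop_nat 1)
  refine ⟨fun r _ => hmom r, fun k => ?_⟩
  set L : ℝ := m ^ k / (Nat.factorial k : ℝ) * Real.exp (-m) with hL
  set Q : ℕ → ℝ := fun M => ∑ j ∈ Finset.range (M+1),
    (-1:ℝ)^j * ((k+j).choose k : ℝ) * (m^(k+j) / (Nat.factorial (k+j) : ℝ)) with hQdef
  set R : ℕ → ℝ := fun M => ((k+M+1).choose k : ℝ) * (m^(k+M+1) / (Nat.factorial (k+M+1) : ℝ))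
    with hRdef
  have hQ : Tendsto Q atTop (nhds L) := by
    have hQe : Q = fun M => m ^ k / (Nat.factorial k : ℝ) *
        ∑ j ∈ Finset.range (M+1), ((-m)^j / (Nat.factorial j : ℝ)) := by
      funext M
      rw [hQdef, Finset.mul_sum]
      exact Finset.sum_congr rfl fun j _ => pois_term k j m
    rw [hQe, hL]
    exact hexp.const_mul _
  have hRe : ∀ M, R M = m ^ k / (Nat.factorial k : ℝ) *
      (m^(M+1) / (Nat.factorial (M+1) : ℝ)) := by
    intro M
    have h0 := Nat.add_choose_mul_factorial_mul_factorial (M+1) k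
    rw [Nat.add_comm (M+1) k] at h0
    have h : ((k+(M+1)).choose k : ℝ) * (Nat.factorial (M+1) : ℝ) * (Nat.factorial k : ℝ)
        = (Nat.factorial (k+(M+1)) : ℝ) := by exact_mod_cast congrArg (fun x : ℕ => (x : ℝ)) h0
    have hk : (Nat.factorial k : ℝ) ≠ 0 := by positivity
    have hj : (Nat.factorial (M+1) : ℝ) ≠ 0 := by positivity
    have hkj : (Nat.factorial (k+(M+1)) : ℝ) ≠ 0 := by positivity
    calc R M = ((k+(M+1)).choose k : ℝ) * (m^(k+(M+1)) / (Nat.factorial (k+(M+1)) : ℝ)) := by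
          simp only [hRdef, Nat.add_assoc]
      _ = m ^ k / (Nat.factorial k : ℝ) * (m^(M+1) / (Nat.factorial (M+1) : ℝ)) := by
          rw [pow_add]
          field_simp
          rw [← h]
          ring
  have hR : Tendsto R atTop (nhds 0) := by
    have h1 := (FloorSemiring.tendsto_pow_div_factorial_atTop (K := ℝ) m).comp
      (tendsto_add_atTop_nat 1)
    have h2 := h1.const_mul (m ^ k / (Nat.factorial k : ℝ))
    rw [mul_zero] at h2
    exact h2.congr fun M => (hRe M).symm
  have hRnn : ∀ M, 0 ≤ R M := by
    intro M
    rw [hRdef]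
    exact mul_nonneg (Nat.cast_nonneg _) (div_nonneg (pow_nonneg hm _) (Nat.cast_nonneg _))
  rw [Metric.tendsto_nhds]
  intro ε hε
  obtain ⟨M, hM1, hM2⟩ : ∃ M, dist (Q M) L < ε/4 ∧ dist (R M) 0 < ε/4 :=
    ((Metric.tendsto_nhds.mp hQ (ε/4) (by positivity)).and
      (Metric.tendsto_nhds.mp hR (ε/4) (by positivity))).exists
  have hT : Tendsto (fun n => ∑ j ∈ Finset.range (M+1), (-1:ℝ)^j * ((k+j).choose k : ℝ) *
      ∫ z, ((((F n).filter (fun h => z ∈ A n h)).card.choose (k+j) : ℕ) : ℝ) ∂ν)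
      atTop (nhds (Q M)) := by
    rw [hQdef]
    exact tendsto_finset_sum _ fun j _ => (hmom (k+j)).const_mul _
  have hE : Tendsto (fun n => ((k+M+1).choose k : ℝ) *
      ∫ z, ((((F n).filter (fun h => z ∈ A n h)).card.choose (k+M+1) : ℕ) : ℝ) ∂ν)
      atTop (nhds (R M)) := by
    rw [hRdef]
    exact (hmom (k+M+1)).const_mul _
  filter_upwards [Metric.tendsto_nhds.mp hT (ε/4) (by positivity),
    Metric.tendsto_nhds.mp hE (ε/4) (by positivity)] with n h1 h2
  have e1 := hkey2 k M n
  rw [Real.dist_eq] at h1 h2 hM1 hM2 ⊢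
  rw [sub_zero] at hM2
  have e5 : R M < ε/4 := lt_of_le_of_lt (le_abs_self _) hM2
  have e4 : ((k+M+1).choose k : ℝ) *
      ∫ z, ((((F n).filter (fun h => z ∈ A n h)).card.choose (k+M+1) : ℕ) : ℝ) ∂ν
      < R M + ε/4 := by
    have := lt_of_le_of_lt (le_abs_self _) h2
    linarith
  have hsplit : (ν {z | ((F n).filter (fun h => z ∈ A n h)).card = k}).toReal - L
      = -((∑ j ∈ Finset.range (M+1), (-1:ℝ)^j * ((k+j).choose k : ℝ) *
          ∫ z, ((((F n).filter (fun h => z ∈ A n h)).card.choose (k+j) : ℕ) : ℝ) ∂ν)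
        - (ν {z | ((F n).filter (fun h => z ∈ A n h)).card = k}).toReal)
        + ((∑ j ∈ Finset.range (M+1), (-1:ℝ)^j * ((k+j).choose k : ℝ) *
          ∫ z, ((((F n).filter (fun h => z ∈ A n h)).card.choose (k+j) : ℕ) : ℝ) ∂ν) - Q M)
        + (Q M - L) := by ring
  rw [hsplit]
  calc |_ + (Q M - L)| ≤ |_| + |Q M - L| := abs_add_le _ _
    _ ≤ (|_| + |_|) + |Q M - L| := by gcongr ?_ + _; exact abs_add_le _ _
    _ < ε := by
        rw [abs_neg]
        have := e1.trans e4.le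
        linarith
end

section
/- Suppose $(\eta, C)$ is an $(a,b,c)$-regular pair on $\mathbb{R}^d$: $\eta$ is locally Lipschitz and $\gamma$-homogeneous for some $\gamma \ge 0$, $\tau$ is a semi-norm with $C = \{\tau \le 1\}$, and $C(t) = \{x \in C : \eta(x) < t\}$ is bounded for each $t \ge 0$. Then there exists a constant $M > 0$ such that for all $\varepsilon, t \in [0,1]$, $W_\varepsilon . C(t) \subseteq (1 + M\varepsilon) \cdot C(t + M\varepsilon)$, where $W_\varepsilon = \{g \in \mathrm{SL}_d(\mathbb{R}) : \|g - \mathrm{id}\|_{\mathrm{op}} < \varepsilon\}$. -/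
open scoped Pointwise

open Metric Set

/-- A locally Lipschitz real-valued function satisfies a global Lipschitz-type bound
on any compact set. -/
lemma locallyLipschitz_compact_bound {α : Type*} [MetricSpace α] (f : α → ℝ)
    (hf : LocallyLipschitz f) (K : Set α) (hK : IsCompact K) :
    ∃ L : ℝ, 0 ≤ L ∧ ∀ y ∈ K, ∀ z ∈ K, dist (f y) (f z) ≤ L * dist y z := by
  rcases K.eq_empty_or_nonempty with rfl | hne
  · exact ⟨0, le_refl _, by simp⟩
  have hcont : Continuous f := hf.continuous
  choose Kc tc htc hlip using hf
  choose r hr hball using fun x => Metric.mem_nhds_iff.mp (htc x)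
  obtain ⟨s, hsK, hcov⟩ := hK.elim_nhds_subcover (fun x => ball x (r x / 2))
    (fun x _ => ball_mem_nhds x (by have := hr x; positivity))
  have hs : s.Nonempty := by
    obtain ⟨y, hy⟩ := hne
    have h := hcov hy
    simp only [mem_iUnion, exists_prop] at h
    obtain ⟨x, hx, _⟩ := h
    exact ⟨x, hx⟩
  obtain ⟨B, hB⟩ := hK.exists_bound_of_continuousOn hcont.continuousOn
  set C := max B 0 with hC
  have hC0 : 0 ≤ C := le_max_right _ _
  have hCb : ∀ y ∈ K, |f y| ≤ C := fun y hy =>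
    le_trans (by simpa [Real.norm_eq_abs] using hB y hy) (le_max_left _ _)
  set δ := s.inf' hs (fun x => r x / 2) with hδdef
  have hδ : 0 < δ := by
    rw [hδdef, Finset.lt_inf'_iff]
    intro x _
    have := hr x
    positivity
  set L1 := s.sup' hs (fun x => (Kc x : ℝ)) with hL1def
  obtain ⟨x0, hx0⟩ := hs
  have hL1nn : 0 ≤ L1 := le_trans (Kc x0).coe_nonneg (Finset.le_sup' (fun x => (Kc x : ℝ)) hx0)
  refine ⟨L1 + 2 * C / δ, by positivity, fun y hy z hz => ?_⟩
  rcases lt_or_ge (dist y z) δ with hd | hd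
  · have h := hcov hy
    simp only [mem_iUnion, exists_prop] at h
    obtain ⟨x, hxs, hyx⟩ := h
    rw [mem_ball] at hyx
    have hδle : δ ≤ r x / 2 := Finset.inf'_le _ hxs
    have hy' : y ∈ tc x := hball x (mem_ball.mpr (lt_of_lt_of_le hyx (by linarith [hr x])))
    have hz' : z ∈ tc x := by
      refine hball x (mem_ball.mpr ?_)
      calc dist z x ≤ dist z y + dist y x := dist_triangle _ _ _
        _ < δ + r x / 2 := by rw [dist_comm z y]; exact add_lt_add hd hyx
        _ ≤ r x := by linarith
    have key := (hlip x).dist_le_mul y hy' z hz'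
    have hKle : (Kc x : ℝ) ≤ L1 := Finset.le_sup' (fun x => (Kc x : ℝ)) hxs
    calc dist (f y) (f z) ≤ (Kc x : ℝ) * dist y z := key
      _ ≤ L1 * dist y z := mul_le_mul_of_nonneg_right hKle dist_nonneg
      _ ≤ (L1 + 2 * C / δ) * dist y z := by
          apply mul_le_mul_of_nonneg_right _ dist_nonneg
          have : 0 ≤ 2 * C / δ := by positivity
          linarith
  · have hfar : dist (f y) (f z) ≤ 2 * C := by
      rw [Real.dist_eq]
      calc |f y - f z| ≤ |f y| + |f z| := by
            simpa [sub_eq_add_neg] using abs_add_le (f y) (-(f z))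
        _ ≤ C + C := add_le_add (hCb y hy) (hCb z hz)
        _ = 2 * C := by ring
    calc dist (f y) (f z) ≤ 2 * C := hfar
      _ = (2 * C / δ) * δ := by field_simp
      _ ≤ (2 * C / δ) * dist y z := mul_le_mul_of_nonneg_left hd (by positivity)
      _ ≤ (L1 + 2 * C / δ) * dist y z :=
          mul_le_mul_of_nonneg_right (le_add_of_nonneg_left hL1nn) dist_nonneg

/-- Lemma 3.2, perturbation of regular pairs: suppose `η` is a nonnegative
locally Lipschitz `γ`-homogeneous function, `τ` a seminorm, `C = {τ ≤ 1}` and each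
`C(t) = {x : η x < t, τ x ≤ 1}` is bounded.  Then there is `M > 0` such that for all
`ε, t ∈ [0,1]`, `W_ε.C(t) ⊆ (1 + Mε) • C(t + Mε)`, where
`W_ε = {g ∈ SL_d(ℝ) : ‖g - id‖_op < ε}` (operator norm w.r.t. the sup norm). -/
theorem stmt9 {d : ℕ} (hd : 1 ≤ d) (γ : ℝ) (hγ : 0 ≤ γ)
    (η : (Fin d → ℝ) → ℝ) (hηpos : ∀ x, 0 ≤ η x) (hηlip : LocallyLipschitz η)
    (hηhom : ∀ s : ℝ, 0 < s → ∀ x, η (s • x) = s ^ γ * η x)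
    (τ : Seminorm ℝ (Fin d → ℝ))
    (hbdd : ∀ t : ℝ, 0 ≤ t → Bornology.IsBounded {x | η x < t ∧ τ x ≤ 1}) :
    ∃ M > (0 : ℝ), ∀ ε t : ℝ, ε ∈ Set.Icc (0 : ℝ) 1 → t ∈ Set.Icc (0 : ℝ) 1 →
      ∀ g : (Fin d → ℝ) →L[ℝ] (Fin d → ℝ),
        LinearMap.det (g : (Fin d → ℝ) →ₗ[ℝ] (Fin d → ℝ)) = 1 →
        ‖g - ContinuousLinearMap.id ℝ (Fin d → ℝ)‖ < ε →
        ∀ x : Fin d → ℝ, η x < t → τ x ≤ 1 →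
          g x ∈ (1 + M * ε) • {y : Fin d → ℝ | η y < t + M * ε ∧ τ y ≤ 1} := by
  classical
  obtain ⟨R, hR⟩ := isBounded_iff_forall_norm_le.mp (hbdd 1 zero_le_one)
  set M₀ := max R 1 with hM₀def
  have hM₀1 : (1 : ℝ) ≤ M₀ := le_max_right _ _
  have hM₀0 : (0 : ℝ) < M₀ := lt_of_lt_of_le one_pos hM₀1
  have hxbound : ∀ x, η x < 1 → τ x ≤ 1 → ‖x‖ ≤ M₀ := fun x h1 h2 =>
    (hR x ⟨h1, h2⟩).trans (le_max_left _ _)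
  obtain ⟨L, hL0, hLip⟩ := locallyLipschitz_compact_bound η hηlip
    (closedBall 0 (2 * M₀)) (isCompact_closedBall 0 _)
  set Kτ := ∑ i : Fin d, τ (fun j => if i = j then (1 : ℝ) else 0) with hKτdef
  have hKτ0 : 0 ≤ Kτ := Finset.sum_nonneg fun i _ => apply_nonneg τ _
  have hτb : ∀ z : Fin d → ℝ, τ z ≤ Kτ * ‖z‖ := by
    intro z
    calc τ z = τ (∑ i, z i • fun j => if i = j then (1 : ℝ) else 0) := by
          rw [← pi_eq_sum_univ z]
      _ ≤ ∑ i, τ (z i • fun j => if i = j then (1 : ℝ) else 0) :=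
          Finset.le_sum_of_subadditive τ (map_zero τ).le (map_add_le_add τ) _ _
      _ = ∑ i, ‖z i‖ * τ (fun j => if i = j then (1 : ℝ) else 0) := by
          simp only [map_smul_eq_mul]
      _ ≤ ∑ i, ‖z‖ * τ (fun j => if i = j then (1 : ℝ) else 0) :=
          Finset.sum_le_sum fun i _ =>
            mul_le_mul_of_nonneg_right (norm_le_pi_norm z i) (apply_nonneg τ _)
      _ = Kτ * ‖z‖ := by rw [← Finset.mul_sum, mul_comm]
  set M := max (max (L * M₀) (Kτ * M₀)) 1 with hMdef
  refine ⟨M, lt_of_lt_of_le one_pos (le_max_right _ _), ?_⟩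
  intro ε t hε ht g hdet hg x hηx hτx
  have hM1 : (1 : ℝ) ≤ M := le_max_right _ _
  have hM0 : (0 : ℝ) < M := lt_of_lt_of_le one_pos hM1
  have hε0 : 0 < ε := lt_of_le_of_lt (norm_nonneg _) hg
  have hε1 : ε ≤ 1 := hε.2
  have ht1 : t ≤ 1 := ht.2
  have hxM : ‖x‖ ≤ M₀ := hxbound x (lt_of_lt_of_le hηx ht1) hτx
  have hgx_sub : ‖g x - x‖ ≤ ε * M₀ := by
    have hrw : g x - x = (g - ContinuousLinearMap.id ℝ (Fin d → ℝ)) x := by simp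
    rw [hrw]
    calc ‖(g - ContinuousLinearMap.id ℝ (Fin d → ℝ)) x‖
        ≤ ‖g - ContinuousLinearMap.id ℝ (Fin d → ℝ)‖ * ‖x‖ :=
          ContinuousLinearMap.le_opNorm _ x
      _ ≤ ε * M₀ := mul_le_mul hg.le hxM (norm_nonneg _) hε0.le
  have hgx_subM : ‖g x - x‖ ≤ M₀ := hgx_sub.trans (by nlinarith)
  have hx_ball : x ∈ closedBall (0 : Fin d → ℝ) (2 * M₀) := by
    rw [mem_closedBall_zero_iff]; linarith
  have hgx_ball : g x ∈ closedBall (0 : Fin d → ℝ) (2 * M₀) := by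
    rw [mem_closedBall_zero_iff]
    have h := norm_add_le (g x - x) x
    rw [sub_add_cancel] at h
    linarith
  have hLM : L * M₀ ≤ M := le_trans (le_max_left _ _) (le_max_left _ _)
  have hKM : Kτ * M₀ ≤ M := le_trans (le_max_right _ _) (le_max_left _ _)
  have hηgx : η (g x) < t + M * ε := by
    have h1 := hLip (g x) hgx_ball x hx_ball
    rw [Real.dist_eq, dist_eq_norm] at h1
    have h2 : |η (g x) - η x| ≤ L * (ε * M₀) :=
      h1.trans (mul_le_mul_of_nonneg_left hgx_sub hL0)
    have h3 := (abs_le.mp h2).2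
    nlinarith [mul_le_mul_of_nonneg_right hLM hε0.le]
  have hτgx : τ (g x) ≤ 1 + M * ε := by
    have h1 : τ (g x) ≤ τ x + τ (g x - x) := by
      have h := map_add_le_add τ x (g x - x)
      rwa [add_sub_cancel] at h
    have h2 : τ (g x - x) ≤ Kτ * (ε * M₀) :=
      (hτb _).trans (mul_le_mul_of_nonneg_left hgx_sub hKτ0)
    nlinarith [mul_le_mul_of_nonneg_right hKM hε0.le]
  have hs1 : (1 : ℝ) ≤ 1 + M * ε := by nlinarith
  have hs0 : (0 : ℝ) < 1 + M * ε := lt_of_lt_of_le one_pos hs1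
  refine Set.mem_smul_set.mpr ⟨(1 + M * ε)⁻¹ • g x, ⟨?_, ?_⟩, ?_⟩
  · rw [hηhom (1 + M * ε)⁻¹ (by positivity) (g x)]
    have hpow : ((1 + M * ε)⁻¹ : ℝ) ^ γ ≤ 1 :=
      Real.rpow_le_one (by positivity) (inv_le_one_of_one_le₀ hs1) hγ
    calc ((1 + M * ε)⁻¹ : ℝ) ^ γ * η (g x) ≤ 1 * η (g x) :=
          mul_le_mul_of_nonneg_right hpow (hηpos _)
      _ = η (g x) := one_mul _
      _ < t + M * ε := hηgx
  · rw [map_smul_eq_mul, Real.norm_eq_abs, abs_of_pos (by positivity : (0:ℝ) < (1 + M * ε)⁻¹)]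
    have h := mul_le_mul_of_nonneg_left hτgx (by positivity : (0:ℝ) ≤ (1 + M * ε)⁻¹)
    rwa [inv_mul_cancel₀ hs0.ne'] at h
  · exact smul_inv_smul₀ hs0.ne' (g x)
end

section
/- Let $(X,\mu)$ be a probability space and for each $T$ in an index set $\mathscr{T}$ let $f_T : X \to (0,\infty)$ be measurable, with a 'size' function $T \mapsto \|T\|_\infty \in [1,\infty)$. Suppose there are $a, \lambda > 0$, $b \ge 0$ such that for a given sequence of finite subsets $\Delta_n \subset \mathscr{T}$ with (i) $\min\{\|T\|_\infty : T \in \Delta_n\} \to \infty$, (ii) $|\Delta_n|^a(\log|\Delta_n|)^b / \rho(\Delta_n) \to \infty$ where $\rho(\Delta_n) = \max\{(\log\|T\|_\infty)^{a\delta} : T \in \Delta_n\}$ for a fixed $\delta > 0$, and (iii) for every $u > 0$, $\mu(\{x : |\Delta_n|^a(\log|\Delta_n|)^b \min_{T\in\Delta_n} f_T(x) > u\}) \to e^{-(\lambda u)^a}$. Then for every $c_1 > 0$, $\mu(\{x \in X : \liminf_{\|T\|_\infty \to \infty} (\log\|T\|_\infty)^{a\delta} f_T(x) > c_1\}) = 0$.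 -/
open MeasureTheory Filter

/-- abstract core of Proposition A.1: Weibull asymptotics implies a
logarithm law: suppose the minima `M_Δₙ = min_{T ∈ Δₙ} f_T` along a sequence of finite
sets `Δₙ` satisfying (i) `min_{T ∈ Δₙ} ‖T‖_∞ → ∞` and (ii)
`|Δₙ|^a (log|Δₙ|)^b / ρ(Δₙ) → ∞` (where `ρ(Δₙ) = max_{T∈Δₙ} (log‖T‖_∞)^{aδ}`) have
Weibull tails: (iii) `μ(|Δₙ|^a(log|Δₙ|)^b · M_Δₙ > u) → e^{-(λu)^a}` for every `u > 0`.
Then for every `c₁ > 0` the set of `x` with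
`liminf_{‖T‖_∞ → ∞} (log‖T‖_∞)^{aδ} f_T(x) > c₁` is null. -/
theorem stmt17 {X 𝒯 : Type*} [MeasurableSpace X] (μ : Measure X) [IsProbabilityMeasure μ]
    (f : 𝒯 → X → ℝ) (hfpos : ∀ T x, 0 < f T x) (hfmeas : ∀ T, Measurable (f T))
    (size : 𝒯 → ℝ) (hsize : ∀ T, 1 ≤ size T)
    (a lam b δ : ℝ) (ha : 0 < a) (hlam : 0 < lam) (hb : 0 ≤ b) (hδ : 0 < δ)
    (Δ : ℕ → Finset 𝒯) (hne : ∀ n, (Δ n).Nonempty)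
    (hi : ∀ R : ℝ, ∀ᶠ n in atTop, ∀ T ∈ Δ n, R ≤ size T)
    (hii : ∀ C : ℝ, ∀ᶠ n in atTop, ∀ T ∈ Δ n,
      C * (Real.log (size T)) ^ (a * δ)
        ≤ ((Δ n).card : ℝ) ^ a * (Real.log ((Δ n).card)) ^ b)
    (hiii : ∀ u : ℝ, 0 < u →
      Tendsto (fun n =>
          (μ {x | u < ((Δ n).card : ℝ) ^ a * (Real.log ((Δ n).card)) ^ b
            * (Δ n).inf' (hne n) (fun T => f T x)}).toReal)
        atTop (nhds (Real.exp (-(lam * u) ^ a)))) :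
    ∀ c₁ : ℝ, 0 < c₁ →
      μ {x | ∃ T₀ : ℝ, ∀ T : 𝒯, T₀ ≤ size T →
        c₁ < (Real.log (size T)) ^ (a * δ) * f T x} = 0 := by
  intro c₁ hc₁
  set A := {x | ∃ T₀ : ℝ, ∀ T : 𝒯, T₀ ≤ size T →
      c₁ < (Real.log (size T)) ^ (a * δ) * f T x} with hA
  set E : ℝ → ℕ → Set X := fun u n =>
    {x | u < ((Δ n).card : ℝ) ^ a * (Real.log ((Δ n).card)) ^ b
      * (Δ n).inf' (hne n) (fun T => f T x)} with hE
  -- Step 1: for u > 0, A ⊆ ⋃_N ⋂_{n ≥ N} E u n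
  have key : ∀ u : ℝ, 0 < u → ∀ ε : ℝ, 0 < ε →
      μ A ≤ ENNReal.ofReal (Real.exp (-(lam * u) ^ a) + ε) := by
    intro u hu ε hε
    set S : ℕ → Set X := fun N => ⋂ n ∈ Set.Ici N, E u n with hS
    have hSmono : Monotone S := by
      intro N M hNM
      exact Set.biInter_subset_biInter_left (fun n hn => le_trans hNM hn)
    have hsub : A ⊆ ⋃ N, S N := by
      rintro x ⟨T₀, hx⟩
      -- eventually, x ∈ E u n
      have h1 := hi (max T₀ 2)
      have h2 := hii (u / c₁)
      have h3 : ∀ᶠ n in atTop, x ∈ E u n := by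
        filter_upwards [h1, h2] with n hn1 hn2
        obtain ⟨T, hT, hTeq⟩ := Finset.exists_mem_eq_inf' (hne n) (fun T => f T x)
        have hsT : max T₀ 2 ≤ size T := hn1 T hT
        have hT₀ : T₀ ≤ size T := le_trans (le_max_left _ _) hsT
        have h2T : (2:ℝ) ≤ size T := le_trans (le_max_right _ _) hsT
        have hlog : 0 < Real.log (size T) :=
          Real.log_pos (lt_of_lt_of_le one_lt_two h2T)
        have hL : 0 < (Real.log (size T)) ^ (a * δ) :=
          Real.rpow_pos_of_pos hlog _
        have hfx : c₁ / (Real.log (size T)) ^ (a * δ) < f T x := by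
          rw [div_lt_iff₀ hL]
          calc c₁ < (Real.log (size T)) ^ (a * δ) * f T x := hx T hT₀
            _ = f T x * (Real.log (size T)) ^ (a * δ) := mul_comm _ _
        have hK : u / c₁ * (Real.log (size T)) ^ (a * δ)
            ≤ ((Δ n).card : ℝ) ^ a * (Real.log ((Δ n).card)) ^ b := hn2 T hT
        have hKpos : 0 < ((Δ n).card : ℝ) ^ a * (Real.log ((Δ n).card)) ^ b :=
          lt_of_lt_of_le (by positivity) hK
        show u < _
        rw [hTeq]
        calc u = (u / c₁ * (Real.log (size T)) ^ (a * δ))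
                * (c₁ / (Real.log (size T)) ^ (a * δ)) := by
              field_simp
          _ ≤ (((Δ n).card : ℝ) ^ a * (Real.log ((Δ n).card)) ^ b)
                * (c₁ / (Real.log (size T)) ^ (a * δ)) := by
              apply mul_le_mul_of_nonneg_right hK (by positivity)
          _ < (((Δ n).card : ℝ) ^ a * (Real.log ((Δ n).card)) ^ b) * f T x :=
              mul_lt_mul_of_pos_left hfx hKpos
      obtain ⟨N, hN⟩ := h3.exists_forall_of_atTop
      exact Set.mem_iUnion.mpr ⟨N, Set.mem_biInter fun n hn => hN n hn⟩
    -- bound μ of each S N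
    have htend := hiii u hu
    have hev : ∀ᶠ n in atTop,
        (μ (E u n)).toReal < Real.exp (-(lam * u) ^ a) + ε := by
      have := htend.eventually (Filter.Tendsto.eventually_lt_const
        (lt_add_of_pos_right _ hε) (tendsto_id (α := ℝ)))
      filter_upwards [htend.eventually
        (gt_mem_nhds (lt_add_of_pos_right _ hε))] with n hn using hn
    obtain ⟨N₀, hN₀⟩ := hev.exists_forall_of_atTop
    have hSbound : ∀ N, μ (S N) ≤ ENNReal.ofReal (Real.exp (-(lam * u) ^ a) + ε) := by
      intro N
      have hmem : max N N₀ ∈ Set.Ici N := Set.mem_Ici.mpr (le_max_left _ _)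
      have : μ (S N) ≤ μ (E u (max N N₀)) :=
        measure_mono (Set.biInter_subset_of_mem hmem)
      refine this.trans ?_
      have hfin : μ (E u (max N N₀)) ≠ ⊤ := measure_ne_top μ _
      rw [← ENNReal.ofReal_toReal hfin]
      exact ENNReal.ofReal_le_ofReal (le_of_lt (hN₀ _ (le_max_right _ _)))
    calc μ A ≤ μ (⋃ N, S N) := measure_mono hsub
      _ = ⨆ N, μ (S N) := hSmono.measure_iUnion
      _ ≤ ENNReal.ofReal (Real.exp (-(lam * u) ^ a) + ε) := iSup_le hSbound
  -- Step 2: send u → ∞ and ε → 0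
  by_contra hAne
  have hApos : 0 < μ A := pos_iff_ne_zero.mpr hAne
  have hAfin : μ A ≠ ⊤ := measure_ne_top μ _
  have hAr : 0 < (μ A).toReal := ENNReal.toReal_pos hAne hAfin
  -- choose u with exp small
  have hlim : Tendsto (fun u : ℝ => Real.exp (-(lam * u) ^ a)) atTop (nhds 0) := by
    apply Real.tendsto_exp_atBot.comp
    apply Filter.tendsto_neg_atBot_iff.mpr
    exact (tendsto_rpow_atTop ha).comp (Tendsto.const_mul_atTop hlam tendsto_id)
  have hev : ∀ᶠ u in atTop, Real.exp (-(lam * u) ^ a) < (μ A).toReal / 4 := by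
    exact hlim.eventually (gt_mem_nhds (by positivity))
  obtain ⟨u, hu1, hu2⟩ := (hev.and (eventually_gt_atTop 0)).exists
  have := key u hu2 ((μ A).toReal / 4) (by positivity)
  have hlt : Real.exp (-(lam * u) ^ a) + (μ A).toReal / 4 < (μ A).toReal := by
    nlinarith [hu1, hAr]
  have : μ A ≤ ENNReal.ofReal (Real.exp (-(lam * u) ^ a) + (μ A).toReal / 4) := this
  have hcontra : μ A < μ A := by
    calc μ A ≤ ENNReal.ofReal (Real.exp (-(lam * u) ^ a) + (μ A).toReal / 4) := this
      _ < ENNReal.ofReal ((μ A).toReal) := by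
          exact (ENNReal.ofReal_lt_ofReal_iff hAr).mpr hlt
      _ = μ A := ENNReal.ofReal_toReal hAfin
  exact lt_irrefl _ hcontra
end
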